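/- arXiv:2512.10217 — 6 statements merged into one kernel-verified Lean document; each statement's English description precedes it below -/
import Mathlib

section
/- Shearer's validity criterion (easy direction): let V be a finite set of variables, k a positive integer, and Z_1,...,Z_m ⊆ V such that every element of V belongs to at least k of the sets Z_i. Then for every polymatroid h on V, k·h(V) ≤ ∑_{i=1}^m h(Z_i). -/
open Finset

/-- Shearer's validity criterion (easy direction): if every element of `V` belongs
to at least `k` of the sets `Z i`, then `k·h(V) ≤ ∑ i, h(Z i)` for every polymatroid `h`. -/
theorem shearer_easy {V : Type*} [Fintype V] [DecidableEq V]
    (h : Finset V → ℝ)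
    (h0 : h ∅ = 0) (hnn : ∀ S, 0 ≤ h S)
    (hmono : ∀ S T, S ⊆ T → h S ≤ h T)
    (hsub : ∀ S T, h (S ∪ T) + h (S ∩ T) ≤ h S + h T)
    (k m : ℕ) (hk : 0 < k) (Z : Fin m → Finset V)
    (hcover : ∀ v : V, k ≤ (Finset.univ.filter fun i => v ∈ Z i).card) :
    (k : ℝ) * h Finset.univ ≤ ∑ i, h (Z i) := by
  classical
  obtain e := Fintype.equivFin V
  set lt : V → Finset V := fun v => univ.filter (fun w => e w < e v) with hltdef
  have hltmem : ∀ v w, w ∈ lt v ↔ e w < e v := by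
    intro v w; simp [hltdef]
  have hvlt : ∀ v, v ∉ lt v := by
    intro v; simp [hltdef]
  -- telescoping
  have tel : ∀ S : Finset V,
      h S = ∑ v ∈ S, (h (insert v (S ∩ lt v)) - h (S ∩ lt v)) := by
    intro S
    induction S using Finset.strongInduction with
    | _ S ih =>
      rcases S.eq_empty_or_nonempty with rfl | hS
      · simp [h0]
      · obtain ⟨v, hv, hmax⟩ := S.exists_max_image (fun w => e w) hS
        have hinter : S ∩ lt v = S.erase v := by
          ext w
          simp only [mem_inter, hltmem, mem_erase]
          constructor
          · rintro ⟨hw, hlt'⟩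
            refine ⟨fun hwv => ?_, hw⟩
            subst hwv; exact lt_irrefl _ hlt'
          · rintro ⟨hne, hw⟩
            refine ⟨hw, lt_of_le_of_ne (hmax w hw) fun hee => hne (e.injective hee)⟩
        have hins : insert v (S.erase v) = S := insert_erase hv
        have key : ∀ w ∈ S.erase v, (S.erase v) ∩ lt w = S ∩ lt w := by
          intro w hw
          ext x
          simp only [mem_inter, mem_erase]
          constructor
          · rintro ⟨⟨_, hx⟩, h2⟩; exact ⟨hx, h2⟩
          · rintro ⟨hx, h2⟩
            refine ⟨⟨?_, hx⟩, h2⟩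
            rintro rfl
            exact absurd ((hltmem w x).1 h2) (not_lt.2 (hmax w ((mem_erase.1 hw).2)))
        have hsum : ∑ w ∈ S, (h (insert w (S ∩ lt w)) - h (S ∩ lt w))
            = (h (insert v (S ∩ lt v)) - h (S ∩ lt v)) +
              ∑ w ∈ S.erase v, (h (insert w (S ∩ lt w)) - h (S ∩ lt w)) :=
          (Finset.add_sum_erase _ _ hv).symm
        rw [hsum, hinter, hins]
        have hih := ih (S.erase v) (erase_ssubset hv)
        have hcg : ∑ w ∈ S.erase v,
            (h (insert w ((S.erase v) ∩ lt w)) - h ((S.erase v) ∩ lt w))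
            = ∑ w ∈ S.erase v, (h (insert w (S ∩ lt w)) - h (S ∩ lt w)) :=
          Finset.sum_congr rfl fun w hw => by rw [key w hw]
        rw [hcg] at hih
        linarith
  -- diminishing returns
  have dim : ∀ (v : V) (A B : Finset V), A ⊆ B → v ∉ B →
      h (insert v B) - h B ≤ h (insert v A) - h A := by
    intro v A B hAB hvB
    have h1 := hsub (insert v A) B
    have hU : insert v A ∪ B = insert v B := by
      rw [insert_union, union_eq_right.2 hAB]
    have hI : (insert v A) ∩ B = A := by
      ext x
      simp only [mem_inter, mem_insert]
      constructor
      · rintro ⟨rfl | hx, hxB⟩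
        · exact absurd hxB hvB
        · exact hx
      · intro hx; exact ⟨Or.inr hx, hAB hx⟩
    rw [hU, hI] at h1
    linarith
  set f : V → ℝ := fun v => h (insert v (lt v)) - h (lt v) with hfdef
  have hfnn : ∀ v, 0 ≤ f v := fun v =>
    sub_nonneg.2 (hmono _ _ (subset_insert _ _))
  have step1 : ∀ i, ∑ v ∈ Z i, f v ≤ h (Z i) := by
    intro i
    rw [tel (Z i)]
    refine Finset.sum_le_sum fun v hv => ?_
    exact dim v (Z i ∩ lt v) (lt v) (inter_subset_right) (hvlt v)
  have step2 : ∑ i, ∑ v ∈ Z i, f v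
      = ∑ v : V, ((univ.filter fun i => v ∈ Z i).card : ℝ) * f v := by
    have h1 : ∀ i, ∑ v ∈ Z i, f v = ∑ v : V, if v ∈ Z i then f v else 0 := by
      intro i
      rw [Finset.sum_ite_mem, univ_inter]
    simp_rw [h1]
    rw [Finset.sum_comm]
    refine Finset.sum_congr rfl fun v _ => ?_
    rw [← Finset.sum_filter, Finset.sum_const, nsmul_eq_mul]
  have step3 : ∀ v : V, (k : ℝ) * f v
      ≤ ((univ.filter fun i => v ∈ Z i).card : ℝ) * f v := by
    intro v
    exact mul_le_mul_of_nonneg_right (by exact_mod_cast hcover v) (hfnn v)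
  have step4 : (k : ℝ) * h Finset.univ = ∑ v : V, (k : ℝ) * f v := by
    rw [← Finset.mul_sum]
    congr 1
    rw [tel Finset.univ]
    exact Finset.sum_congr rfl fun v _ => by rw [univ_inter]
  calc (k : ℝ) * h Finset.univ = ∑ v : V, (k : ℝ) * f v := step4
    _ ≤ ∑ v : V, ((univ.filter fun i => v ∈ Z i).card : ℝ) * f v :=
        Finset.sum_le_sum fun v _ => step3 v
    _ = ∑ i, ∑ v ∈ Z i, f v := step2.symm
    _ ≤ ∑ i, h (Z i) := Finset.sum_le_sum fun i _ => step1 i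
end

section
/- For any finite relations R ⊆ Dom^{A}×Dom^{B}, S ⊆ Dom^{B}×Dom^{C}, T ⊆ Dom^{C}×Dom^{D}, each of size at most N, there exist relations U ⊆ Dom^{A}×Dom^{B}×Dom^{C} and V ⊆ Dom^{B}×Dom^{C}×Dom^{D}, each of size at most N^{3/2}, such that for every tuple (a,b,c,d) with (a,b)∈R, (b,c)∈S, (c,d)∈T, either (a,b,c) ∈ U or (b,c,d) ∈ V. -/
/-- Worst-case output size for the DDR `U(A,B,C) ∨ V(B,C,D) :- R(A,B) ∧ S(B,C) ∧ T(C,D)`: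
given relations of size at most `N`, there is a model with both targets of size
at most `N^{3/2}`. -/
theorem ddr_path_model {Dom : Type*} [Fintype Dom] [DecidableEq Dom]
    (N : ℕ) (hN : 0 < N)
    (R : Finset (Dom × Dom)) (S : Finset (Dom × Dom)) (T : Finset (Dom × Dom))
    (hR : R.card ≤ N) (hS : S.card ≤ N) (hT : T.card ≤ N) :
    ∃ (U : Finset (Dom × Dom × Dom)) (V : Finset (Dom × Dom × Dom)),
      (U.card : ℝ) ≤ (N : ℝ) ^ ((3 : ℝ) / 2) ∧
      (V.card : ℝ) ≤ (N : ℝ) ^ ((3 : ℝ) / 2) ∧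
      ∀ a b c d : Dom, (a, b) ∈ R → (b, c) ∈ S → (c, d) ∈ T →
        (a, b, c) ∈ U ∨ (b, c, d) ∈ V := by
  classical
  -- degree of b in S
  set deg : Dom → ℕ := fun b => (S.filter (fun p => p.1 = b)).card with hdeg
  -- heavy values of b
  set H : Finset Dom := (S.image Prod.fst).filter (fun b => N < (deg b) ^ 2) with hH
  set U : Finset (Dom × Dom × Dom) :=
    R.biUnion (fun ab =>
      (S.filter (fun p => p.1 = ab.2 ∧ (deg ab.2) ^ 2 ≤ N)).image
        (fun p => (ab.1, ab.2, p.2))) with hU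
  set V : Finset (Dom × Dom × Dom) :=
    (H ×ˢ T).image (fun p => (p.1, p.2.1, p.2.2)) with hV
  have hNpos : (0:ℝ) < N := by exact_mod_cast hN
  have hsqrtpos : (0:ℝ) < Real.sqrt N := Real.sqrt_pos.mpr hNpos
  have h32 : (N : ℝ) ^ ((3 : ℝ) / 2) = (N : ℝ) * Real.sqrt N := by
    rw [show (3:ℝ)/2 = 1 + 1/2 by ring, Real.rpow_add hNpos, Real.rpow_one,
      Real.sqrt_eq_rpow]
  -- sum of degrees over the image is |S|
  have hsum : ∑ b ∈ S.image Prod.fst, deg b = S.card := by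
    rw [hdeg]
    exact (Finset.card_eq_sum_card_fiberwise (fun p hp => Finset.mem_image_of_mem _ hp)).symm
  -- heavy count bound: |H| * (Nat.sqrt N + 1) ≤ N
  have hHcard : H.card * (Nat.sqrt N + 1) ≤ N := by
    calc H.card * (Nat.sqrt N + 1) = ∑ _b ∈ H, (Nat.sqrt N + 1) := by
          rw [Finset.sum_const, smul_eq_mul]
      _ ≤ ∑ b ∈ H, deg b := by
          apply Finset.sum_le_sum
          intro b hb
          rw [hH, Finset.mem_filter] at hb
          have := hb.2
          by_contra h
          push_neg at h
          have hle : deg b ≤ Nat.sqrt N := by omega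
          have h2 : (deg b)^2 ≤ N :=
            le_trans (Nat.pow_le_pow_left hle 2) (by simpa [sq] using Nat.sqrt_le' N)
          omega
      _ ≤ ∑ b ∈ S.image Prod.fst, deg b := by
          apply Finset.sum_le_sum_of_subset
          rw [hH]; exact Finset.filter_subset _ _
      _ = S.card := hsum
      _ ≤ N := hS
  have hHreal : (H.card : ℝ) ≤ Real.sqrt N := by
    have h1 : Real.sqrt N < (Nat.sqrt N + 1 : ℕ) := by
      rw [Real.sqrt_lt' (by positivity)]
      push_cast
      exact_mod_cast (by exact_mod_cast Nat.lt_succ_sqrt' N :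
        (N:ℝ) < ((Nat.sqrt N + 1 : ℕ) : ℝ)^2)
    nlinarith [hHcard, (by exact_mod_cast hHcard : (H.card : ℝ) * ((Nat.sqrt N + 1 : ℕ) : ℝ) ≤ (N:ℝ)),
      Real.sq_sqrt hNpos.le, Real.sqrt_nonneg (N:ℝ), (Nat.cast_nonneg H.card : (0:ℝ) ≤ H.card)]
  -- bound on U
  have hUcard : (U.card : ℝ) ≤ (N : ℝ) ^ ((3 : ℝ) / 2) := by
    have hnat : U.card ≤ R.card * Nat.sqrt N := by
      calc U.card ≤ ∑ ab ∈ R,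
            ((S.filter (fun p => p.1 = ab.2 ∧ (deg ab.2) ^ 2 ≤ N)).image
              (fun p => (ab.1, ab.2, p.2))).card := Finset.card_biUnion_le
        _ ≤ ∑ _ab ∈ R, Nat.sqrt N := by
            apply Finset.sum_le_sum
            intro ab _
            refine le_trans Finset.card_image_le ?_
            rcases Nat.eq_zero_or_pos
              ((S.filter (fun p => p.1 = ab.2 ∧ (deg ab.2) ^ 2 ≤ N)).card) with h0 | hpos
            · simp [h0]
            · obtain ⟨p, hp⟩ := Finset.card_pos.mp hpos
              rw [Finset.mem_filter] at hp
              have hle : (deg ab.2)^2 ≤ N := hp.2.2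
              have hd : (S.filter (fun p => p.1 = ab.2 ∧ (deg ab.2) ^ 2 ≤ N)).card ≤ deg ab.2 := by
                apply Finset.card_le_card
                intro q hq
                rw [Finset.mem_filter] at hq ⊢
                exact ⟨hq.1, hq.2.1⟩
              refine hd.trans (Nat.le_sqrt.mpr ?_)
              simpa [sq] using hle
        _ = R.card * Nat.sqrt N := by rw [Finset.sum_const, smul_eq_mul]
    have hsq : ((Nat.sqrt N : ℕ) : ℝ) ≤ Real.sqrt N := by
      nlinarith [Real.sq_sqrt hNpos.le, Real.sqrt_nonneg (N:ℝ),
        (by exact_mod_cast Nat.sqrt_le' N :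
          ((Nat.sqrt N : ℕ) : ℝ) ^ 2 ≤ (N:ℝ)),
        (Nat.cast_nonneg (Nat.sqrt N) : (0:ℝ) ≤ (Nat.sqrt N : ℕ))]
    calc (U.card : ℝ) ≤ (R.card : ℝ) * (Nat.sqrt N : ℝ) := by exact_mod_cast hnat
      _ ≤ (N : ℝ) * Real.sqrt N := by
          apply mul_le_mul (by exact_mod_cast hR) hsq (by positivity) hNpos.le
      _ = (N : ℝ) ^ ((3 : ℝ) / 2) := h32.symm
  have hVcard : (V.card : ℝ) ≤ (N : ℝ) ^ ((3 : ℝ) / 2) := by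
    have hnat : V.card ≤ H.card * T.card := by
      refine le_trans Finset.card_image_le ?_
      rw [Finset.card_product]
    calc (V.card : ℝ) ≤ (H.card : ℝ) * (T.card : ℝ) := by exact_mod_cast hnat
      _ ≤ Real.sqrt N * (N : ℝ) :=
          mul_le_mul hHreal (by exact_mod_cast hT) (by positivity) hsqrtpos.le
      _ = (N : ℝ) ^ ((3 : ℝ) / 2) := by rw [h32]; ring
  refine ⟨U, V, hUcard, hVcard, ?_⟩
  intro a b c d hab hbc hcd
  by_cases hlight : (deg b) ^ 2 ≤ N
  · left
    rw [hU, Finset.mem_biUnion]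
    exact ⟨(a, b), hab, Finset.mem_image.mpr ⟨(b, c),
      Finset.mem_filter.mpr ⟨hbc, rfl, hlight⟩, rfl⟩⟩
  · right
    rw [hV, Finset.mem_image]
    refine ⟨(b, (c, d)), Finset.mem_product.mpr ⟨?_, hcd⟩, rfl⟩
    rw [hH, Finset.mem_filter]
    exact ⟨Finset.mem_image.mpr ⟨(b, c), hbc, rfl⟩, lt_of_not_ge hlight⟩
end

section
/- For finite relations R ⊆ Dom^3 (on variables A,B,C), S (on C,D,E), T (on E,F,A), K (on B,D,F), each of size at most N, the hexagon join Q = {(a,b,c,d,e,f) : (a,b,c)∈R, (c,d,e)∈S, (e,f,a)∈T, (b,d,f)∈K} has size |Q| ≤ N². -/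
open Finset

section helpers
variable {D : Type*} [Fintype D]

private lemma cs_sqrt {ι : Type*} (s : Finset ι) (f g : ι → ℝ) :
    ∑ i ∈ s, f i * g i ≤ Real.sqrt (∑ i ∈ s, f i ^ 2) * Real.sqrt (∑ i ∈ s, g i ^ 2) := by
  calc ∑ i ∈ s, f i * g i ≤ |∑ i ∈ s, f i * g i| := le_abs_self _
    _ = Real.sqrt ((∑ i ∈ s, f i * g i) ^ 2) := (Real.sqrt_sq_eq_abs _).symm
    _ ≤ Real.sqrt ((∑ i ∈ s, f i ^ 2) * ∑ i ∈ s, g i ^ 2) :=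
        Real.sqrt_le_sqrt (Finset.sum_mul_sq_le_sq_mul_sq s f g)
    _ = _ := Real.sqrt_mul (by positivity) _

private lemma sum3' (F : D → D → D → ℝ) :
    ∑ a, ∑ b, ∑ c, F a b c = ∑ p : D × D × D, F p.1 p.2.1 p.2.2 := by
  simp only [Fintype.sum_prod_type]

private lemma sum6 (F : D → D → D → D → D → D → ℝ) :
    ∑ a, ∑ b, ∑ c, ∑ d, ∑ e, ∑ f, F a b c d e f
      = ∑ q : D × D × D × D × D × D,
          F q.1 q.2.1 q.2.2.1 q.2.2.2.1 q.2.2.2.2.1 q.2.2.2.2.2 := by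
  simp only [Fintype.sum_prod_type]

private lemma sum9 (F : D → D → D → D → D → D → D → D → D → ℝ) :
    ∑ a, ∑ b, ∑ c, ∑ d, ∑ e, ∑ f, ∑ g, ∑ h, ∑ i, F a b c d e f g h i
      = ∑ q : D × D × D × D × D × D × D × D × D,
          F q.1 q.2.1 q.2.2.1 q.2.2.2.1 q.2.2.2.2.1 q.2.2.2.2.2.1
            q.2.2.2.2.2.2.1 q.2.2.2.2.2.2.2.1 q.2.2.2.2.2.2.2.2 := by
  simp only [Fintype.sum_prod_type]

private lemma mul_sum3 (F G : D → D → D → ℝ) :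
    (∑ a, ∑ c, ∑ e, F a c e) * (∑ a, ∑ c, ∑ e, G a c e)
      = ∑ a, ∑ c, ∑ e, ∑ a', ∑ c', ∑ e', F a c e * G a' c' e' := by
  rw [Finset.sum_mul]
  refine sum_congr rfl fun a _ => ?_
  rw [Finset.sum_mul]
  refine sum_congr rfl fun c _ => ?_
  rw [Finset.sum_mul]
  refine sum_congr rfl fun e _ => ?_
  rw [Finset.mul_sum]
  refine sum_congr rfl fun a' _ => ?_
  rw [Finset.mul_sum]
  refine sum_congr rfl fun c' _ => ?_
  rw [Finset.mul_sum]

private lemma mul3_sum (X Y Z : D → ℝ) :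
    (∑ b, X b) * (∑ d, Y d) * (∑ f, Z f) = ∑ b, ∑ d, ∑ f, X b * Y d * Z f := by
  rw [Finset.sum_mul_sum, Finset.sum_mul]
  refine sum_congr rfl fun b _ => ?_
  rw [Finset.sum_mul]
  refine sum_congr rfl fun d _ => ?_
  rw [Finset.mul_sum]

private lemma triangle_bound {ι : Type*} [Fintype ι] (F G H : ι → ι → ℝ)
    (hG : ∀ x y, 0 ≤ G x y) :
    ∑ x, ∑ y, ∑ z, F x y * G y z * H z x ≤
      Real.sqrt (∑ x, ∑ y, F x y ^ 2) * Real.sqrt (∑ y, ∑ z, G y z ^ 2) *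
        Real.sqrt (∑ z, ∑ x, H z x ^ 2) := by
  have h0 : ∑ x, ∑ y, ∑ z, F x y * G y z * H z x
      = ∑ y, ∑ z, G y z * ∑ x, F x y * H z x := by
    rw [Finset.sum_comm]
    refine sum_congr rfl fun y _ => ?_
    rw [Finset.sum_comm]
    refine sum_congr rfl fun z _ => ?_
    rw [Finset.mul_sum]
    exact sum_congr rfl fun x _ => by ring
  rw [h0]
  have h1 : ∑ y, ∑ z, G y z * ∑ x, F x y * H z x ≤
      ∑ y, ∑ z, G y z * (Real.sqrt (∑ x, F x y ^ 2) * Real.sqrt (∑ x, H z x ^ 2)) := by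
    refine sum_le_sum fun y _ => sum_le_sum fun z _ => ?_
    exact mul_le_mul_of_nonneg_left (cs_sqrt _ _ _) (hG y z)
  refine h1.trans ?_
  have h2 : ∀ y, ∑ z, G y z * (Real.sqrt (∑ x, F x y ^ 2) * Real.sqrt (∑ x, H z x ^ 2))
      = Real.sqrt (∑ x, F x y ^ 2) * ∑ z, G y z * Real.sqrt (∑ x, H z x ^ 2) := by
    intro y
    rw [Finset.mul_sum]
    exact sum_congr rfl fun z _ => by ring
  simp only [h2]
  have h3 : ∀ y, ∑ z, G y z * Real.sqrt (∑ x, H z x ^ 2) ≤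
      Real.sqrt (∑ z, G y z ^ 2) * Real.sqrt (∑ z, ∑ x, H z x ^ 2) := by
    intro y
    have key := cs_sqrt Finset.univ (fun z => G y z) (fun z => Real.sqrt (∑ x, H z x ^ 2))
    have hsq : ∀ z : ι, Real.sqrt (∑ x, H z x ^ 2) ^ 2 = ∑ x, H z x ^ 2 :=
      fun z => Real.sq_sqrt (by positivity)
    simpa [hsq] using key
  have h4 : ∑ y, Real.sqrt (∑ x, F x y ^ 2) * ∑ z, G y z * Real.sqrt (∑ x, H z x ^ 2) ≤
      ∑ y, Real.sqrt (∑ x, F x y ^ 2) *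
        (Real.sqrt (∑ z, G y z ^ 2) * Real.sqrt (∑ z, ∑ x, H z x ^ 2)) :=
    sum_le_sum fun y _ => mul_le_mul_of_nonneg_left (h3 y) (Real.sqrt_nonneg _)
  refine h4.trans ?_
  have h5 : ∑ y, Real.sqrt (∑ x, F x y ^ 2) *
        (Real.sqrt (∑ z, G y z ^ 2) * Real.sqrt (∑ z, ∑ x, H z x ^ 2))
      = (∑ y, Real.sqrt (∑ x, F x y ^ 2) * Real.sqrt (∑ z, G y z ^ 2)) *
          Real.sqrt (∑ z, ∑ x, H z x ^ 2) := by
    rw [Finset.sum_mul]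
    exact sum_congr rfl fun y _ => by ring
  rw [h5]
  have h6 : ∑ y, Real.sqrt (∑ x, F x y ^ 2) * Real.sqrt (∑ z, G y z ^ 2) ≤
      Real.sqrt (∑ y, ∑ x, F x y ^ 2) * Real.sqrt (∑ y, ∑ z, G y z ^ 2) := by
    have key := cs_sqrt Finset.univ (fun y => Real.sqrt (∑ x, F x y ^ 2))
      (fun y => Real.sqrt (∑ z, G y z ^ 2))
    have hsqF : ∀ y : ι, Real.sqrt (∑ x, F x y ^ 2) ^ 2 = ∑ x, F x y ^ 2 :=
      fun y => Real.sq_sqrt (by positivity)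
    have hsqG : ∀ y : ι, Real.sqrt (∑ z, G y z ^ 2) ^ 2 = ∑ z, G y z ^ 2 :=
      fun y => Real.sq_sqrt (by positivity)
    simpa [hsqF, hsqG] using key
  have hFswap : ∑ y, ∑ x, F x y ^ 2 = ∑ x, ∑ y, F x y ^ 2 := Finset.sum_comm
  calc (∑ y, Real.sqrt (∑ x, F x y ^ 2) * Real.sqrt (∑ z, G y z ^ 2)) *
        Real.sqrt (∑ z, ∑ x, H z x ^ 2)
      ≤ (Real.sqrt (∑ y, ∑ x, F x y ^ 2) * Real.sqrt (∑ y, ∑ z, G y z ^ 2)) *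
          Real.sqrt (∑ z, ∑ x, H z x ^ 2) :=
        mul_le_mul_of_nonneg_right h6 (Real.sqrt_nonneg _)
    _ = _ := by rw [hFswap]

private lemma frob_bound (r : D → D → D → ℝ) (h0 : ∀ a b c, 0 ≤ r a b c)
    (h1 : ∀ a b c, r a b c ≤ 1) :
    ∑ x : D × D, ∑ y : D × D, (∑ b, r x.1 b y.1 * r x.2 b y.2) ^ 2
      ≤ (∑ a, ∑ b, ∑ c, r a b c) ^ 2 := by
  have expand : ∀ x y : D × D, (∑ b, r x.1 b y.1 * r x.2 b y.2) ^ 2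
      = ∑ b, ∑ b', (r x.1 b y.1 * r x.2 b y.2) * (r x.1 b' y.1 * r x.2 b' y.2) := by
    intro x y
    rw [pow_two, Finset.sum_mul_sum]
  simp only [expand]
  have step : ∑ x : D × D, ∑ y : D × D, ∑ b, ∑ b',
        (r x.1 b y.1 * r x.2 b y.2) * (r x.1 b' y.1 * r x.2 b' y.2)
      ≤ ∑ x : D × D, ∑ y : D × D, ∑ b, ∑ b', r x.1 b y.1 * r x.2 b' y.2 := by
    refine sum_le_sum fun x _ => sum_le_sum fun y _ => sum_le_sum fun b _ =>
      sum_le_sum fun b' _ => ?_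
    calc (r x.1 b y.1 * r x.2 b y.2) * (r x.1 b' y.1 * r x.2 b' y.2)
        = (r x.1 b y.1 * r x.2 b' y.2) * (r x.2 b y.2 * r x.1 b' y.1) := by ring
      _ ≤ (r x.1 b y.1 * r x.2 b' y.2) * 1 := by
          refine mul_le_mul_of_nonneg_left ?_ (mul_nonneg (h0 _ _ _) (h0 _ _ _))
          exact mul_le_one₀ (h1 _ _ _) (h0 _ _ _) (h1 _ _ _)
      _ = r x.1 b y.1 * r x.2 b' y.2 := mul_one _
  refine step.trans_eq ?_
  -- now an exact counting identity
  have lhs9 : ∑ x : D × D, ∑ y : D × D, ∑ b, ∑ b', r x.1 b y.1 * r x.2 b' y.2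
      = ∑ a, ∑ a', ∑ c, ∑ c', ∑ b, ∑ b', r a b c * r a' b' c' := by
    simp only [Fintype.sum_prod_type]
  rw [lhs9, pow_two, mul_sum3 r r, sum6 (fun a b c a' b' c' => r a b c * r a' b' c'),
    sum6 (fun a a' c c' b b' => r a b c * r a' b' c')]
  exact Fintype.sum_equiv
    ⟨fun q => (q.1, q.2.2.2.2.1, q.2.2.1, q.2.1, q.2.2.2.2.2, q.2.2.2.1),
     fun p => (p.1, p.2.2.2.1, p.2.2.1, p.2.2.2.2.2, p.2.1, p.2.2.2.2.1),
     fun ⟨a, a', c, c', b, b'⟩ => rfl, fun ⟨a, b, c, a', b', c'⟩ => rfl⟩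
    _ _ (fun ⟨a, a', c, c', b, b'⟩ => rfl)

end helpers

section main
variable {D : Type*} [Fintype D]

private lemma hex_aux (r s t k : D → D → D → ℝ)
    (hr0 : ∀ a b c, 0 ≤ r a b c) (hr1 : ∀ a b c, r a b c ≤ 1)
    (hs0 : ∀ a b c, 0 ≤ s a b c) (hs1 : ∀ a b c, s a b c ≤ 1)
    (ht0 : ∀ a b c, 0 ≤ t a b c) (ht1 : ∀ a b c, t a b c ≤ 1)
    (hk0 : ∀ a b c, 0 ≤ k a b c) (hk1 : ∀ a b c, k a b c ≤ 1) :
    (∑ a, ∑ b, ∑ c, ∑ d, ∑ e, ∑ f, r a b c * s c d e * t e f a * k b d f) ^ 2 ≤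
      (∑ a, ∑ b, ∑ c, r a b c) * (∑ a, ∑ b, ∑ c, s a b c) *
        (∑ a, ∑ b, ∑ c, t a b c) * (∑ a, ∑ b, ∑ c, k a b c) := by
  set M : D → D → D → ℝ := fun b d f => ∑ a, ∑ c, ∑ e, r a b c * s c d e * t e f a with hM
  -- Step 1 : rewrite the join count
  have step1 : ∑ a, ∑ b, ∑ c, ∑ d, ∑ e, ∑ f, r a b c * s c d e * t e f a * k b d f
      = ∑ p : D × D × D, k p.1 p.2.1 p.2.2 * M p.1 p.2.1 p.2.2 := by
    have hr : ∑ p : D × D × D, k p.1 p.2.1 p.2.2 * M p.1 p.2.1 p.2.2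
        = ∑ b, ∑ d, ∑ f, k b d f * M b d f := (sum3' (fun b d f => k b d f * M b d f)).symm
    rw [hr]
    simp only [hM, Finset.mul_sum]
    rw [sum6 (fun a b c d e f => r a b c * s c d e * t e f a * k b d f),
      sum6 (fun b d f a c e => k b d f * (r a b c * s c d e * t e f a))]
    exact Fintype.sum_equiv
      ⟨fun q => (q.2.1, q.2.2.2.1, q.2.2.2.2.2, q.1, q.2.2.1, q.2.2.2.2.1),
       fun p => (p.2.2.2.1, p.1, p.2.2.2.2.1, p.2.1, p.2.2.2.2.2, p.2.2.1),
       fun ⟨a, b, c, d, e, f⟩ => rfl, fun ⟨b, d, f, a, c, e⟩ => rfl⟩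
      _ _ (fun ⟨a, b, c, d, e, f⟩ => by simp only [Equiv.coe_fn_mk]; ring)
  -- Step 2 : Cauchy-Schwarz over (b,d,f)
  have step2 := Finset.sum_mul_sq_le_sq_mul_sq (Finset.univ : Finset (D × D × D))
    (fun p => k p.1 p.2.1 p.2.2) (fun p => M p.1 p.2.1 p.2.2)
  -- Step 3 : sum of k² is at most sum of k
  have step3 : ∑ p : D × D × D, (k p.1 p.2.1 p.2.2) ^ 2 ≤ ∑ a, ∑ b, ∑ c, k a b c := by
    rw [sum3' k]
    exact sum_le_sum fun p _ => by nlinarith [hk0 p.1 p.2.1 p.2.2, hk1 p.1 p.2.1 p.2.2]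
  -- Step 4 : sum of M² is a triangle query
  have step4 : ∑ p : D × D × D, (M p.1 p.2.1 p.2.2) ^ 2
      = ∑ x : D × D, ∑ y : D × D, ∑ z : D × D,
          (∑ b, r x.1 b y.1 * r x.2 b y.2) * (∑ d, s y.1 d z.1 * s y.2 d z.2) *
            (∑ f, t z.1 f x.1 * t z.2 f x.2) := by
    rw [← sum3' (fun b d f => (M b d f) ^ 2)]
    have expandM : ∀ b d f, (M b d f) ^ 2
        = ∑ a, ∑ c, ∑ e, ∑ a', ∑ c', ∑ e',
            (r a b c * s c d e * t e f a) * (r a' b c' * s c' d e' * t e' f a') := by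
      intro b d f
      rw [pow_two, hM, mul_sum3]
    simp only [expandM]
    have rhs_expand : ∑ x : D × D, ∑ y : D × D, ∑ z : D × D,
          (∑ b, r x.1 b y.1 * r x.2 b y.2) * (∑ d, s y.1 d z.1 * s y.2 d z.2) *
            (∑ f, t z.1 f x.1 * t z.2 f x.2)
        = ∑ a, ∑ a', ∑ c, ∑ c', ∑ e, ∑ e', ∑ b, ∑ d, ∑ f,
            (r a b c * r a' b c') * (s c d e * s c' d e') * (t e f a * t e' f a') := by
      simp only [Fintype.sum_prod_type]
      refine sum_congr rfl fun a _ => sum_congr rfl fun a' _ => sum_congr rfl fun c _ =>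
        sum_congr rfl fun c' _ => sum_congr rfl fun e _ => sum_congr rfl fun e' _ => ?_
      exact mul3_sum _ _ _
    rw [rhs_expand]
    rw [sum9 (fun b d f a c e a' c' e' =>
        (r a b c * s c d e * t e f a) * (r a' b c' * s c' d e' * t e' f a')),
      sum9 (fun a a' c c' e e' b d f =>
        (r a b c * r a' b c') * (s c d e * s c' d e') * (t e f a * t e' f a'))]
    exact Fintype.sum_equiv
      ⟨fun q => (q.2.2.2.1, q.2.2.2.2.2.2.1, q.2.2.2.2.1, q.2.2.2.2.2.2.2.1,
           q.2.2.2.2.2.1, q.2.2.2.2.2.2.2.2, q.1, q.2.1, q.2.2.1),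
       fun p => (p.2.2.2.2.2.2.1, p.2.2.2.2.2.2.2.1, p.2.2.2.2.2.2.2.2, p.1,
           p.2.2.1, p.2.2.2.2.1, p.2.1, p.2.2.2.1, p.2.2.2.2.2.1),
       fun ⟨b, d, f, a, c, e, a', c', e'⟩ => rfl,
       fun ⟨a, a', c, c', e, e', b, d, f⟩ => rfl⟩
      _ _ (fun ⟨b, d, f, a, c, e, a', c', e'⟩ => by simp only [Equiv.coe_fn_mk]; ring)
  -- Step 5 : triangle bound + Frobenius bounds
  have hP := frob_bound r hr0 hr1
  have hQ := frob_bound s hs0 hs1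
  have hW := frob_bound t ht0 ht1
  have tri := triangle_bound (ι := D × D)
    (fun x y => ∑ b, r x.1 b y.1 * r x.2 b y.2)
    (fun y z => ∑ d, s y.1 d z.1 * s y.2 d z.2)
    (fun z x => ∑ f, t z.1 f x.1 * t z.2 f x.2)
    (fun y z => Finset.sum_nonneg fun d _ => mul_nonneg (hs0 _ _ _) (hs0 _ _ _))
  have hSR : (0:ℝ) ≤ ∑ a, ∑ b, ∑ c, r a b c :=
    Finset.sum_nonneg fun a _ => Finset.sum_nonneg fun b _ =>
      Finset.sum_nonneg fun c _ => hr0 a b c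
  have hSS : (0:ℝ) ≤ ∑ a, ∑ b, ∑ c, s a b c :=
    Finset.sum_nonneg fun a _ => Finset.sum_nonneg fun b _ =>
      Finset.sum_nonneg fun c _ => hs0 a b c
  have hST : (0:ℝ) ≤ ∑ a, ∑ b, ∑ c, t a b c :=
    Finset.sum_nonneg fun a _ => Finset.sum_nonneg fun b _ =>
      Finset.sum_nonneg fun c _ => ht0 a b c
  have hSK : (0:ℝ) ≤ ∑ a, ∑ b, ∑ c, k a b c :=
    Finset.sum_nonneg fun a _ => Finset.sum_nonneg fun b _ =>
      Finset.sum_nonneg fun c _ => hk0 a b c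
  have hsP : Real.sqrt (∑ x : D × D, ∑ y : D × D, (∑ b, r x.1 b y.1 * r x.2 b y.2) ^ 2)
      ≤ ∑ a, ∑ b, ∑ c, r a b c := by
    have h := Real.sqrt_le_sqrt hP
    rwa [Real.sqrt_sq hSR] at h
  have hsQ : Real.sqrt (∑ y : D × D, ∑ z : D × D, (∑ d, s y.1 d z.1 * s y.2 d z.2) ^ 2)
      ≤ ∑ a, ∑ b, ∑ c, s a b c := by
    have h := Real.sqrt_le_sqrt hQ
    rwa [Real.sqrt_sq hSS] at h
  have hsW : Real.sqrt (∑ z : D × D, ∑ x : D × D, (∑ f, t z.1 f x.1 * t z.2 f x.2) ^ 2)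
      ≤ ∑ a, ∑ b, ∑ c, t a b c := by
    have h := Real.sqrt_le_sqrt hW
    rwa [Real.sqrt_sq hST] at h
  have hMsq : ∑ p : D × D × D, (M p.1 p.2.1 p.2.2) ^ 2 ≤
      (∑ a, ∑ b, ∑ c, r a b c) * (∑ a, ∑ b, ∑ c, s a b c) * (∑ a, ∑ b, ∑ c, t a b c) := by
    rw [step4]
    refine tri.trans ?_
    exact mul_le_mul (mul_le_mul hsP hsQ (Real.sqrt_nonneg _) hSR) hsW
      (Real.sqrt_nonneg _) (mul_nonneg hSR hSS)
  have hM2nonneg : (0:ℝ) ≤ ∑ p : D × D × D, (M p.1 p.2.1 p.2.2) ^ 2 :=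
    Finset.sum_nonneg fun p _ => sq_nonneg _
  calc (∑ a, ∑ b, ∑ c, ∑ d, ∑ e, ∑ f, r a b c * s c d e * t e f a * k b d f) ^ 2
      = (∑ p : D × D × D, k p.1 p.2.1 p.2.2 * M p.1 p.2.1 p.2.2) ^ 2 := by rw [step1]
    _ ≤ (∑ p : D × D × D, (k p.1 p.2.1 p.2.2) ^ 2) *
          ∑ p : D × D × D, (M p.1 p.2.1 p.2.2) ^ 2 := step2
    _ ≤ (∑ a, ∑ b, ∑ c, k a b c) *
          ((∑ a, ∑ b, ∑ c, r a b c) * (∑ a, ∑ b, ∑ c, s a b c) *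
            (∑ a, ∑ b, ∑ c, t a b c)) :=
        mul_le_mul step3 hMsq hM2nonneg hSK
    _ = _ := by ring

end main



/-- AGM bound for the hexagon query: the natural join of `R(A,B,C)`, `S(C,D,E)`,
`T(E,F,A)`, `K(B,D,F)`, each of size at most `N`, has at most `N²` tuples. -/
theorem hexagon_join_bound {Dom : Type*} [Fintype Dom] [DecidableEq Dom]
    (N : ℕ)
    (R S T K : Finset (Dom × Dom × Dom))
    (hR : R.card ≤ N) (hS : S.card ≤ N) (hT : T.card ≤ N) (hK : K.card ≤ N) :
    (Finset.univ.filter fun q : Dom × Dom × Dom × Dom × Dom × Dom =>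
        (q.1, q.2.1, q.2.2.1) ∈ R ∧
        (q.2.2.1, q.2.2.2.1, q.2.2.2.2.1) ∈ S ∧
        (q.2.2.2.2.1, q.2.2.2.2.2, q.1) ∈ T ∧
        (q.2.1, q.2.2.2.1, q.2.2.2.2.2) ∈ K).card ≤ N ^ 2 := by
  have key := hex_aux (D := Dom)
    (fun a b c => if (a, b, c) ∈ R then (1:ℝ) else 0)
    (fun a b c => if (a, b, c) ∈ S then (1:ℝ) else 0)
    (fun a b c => if (a, b, c) ∈ T then (1:ℝ) else 0)
    (fun a b c => if (a, b, c) ∈ K then (1:ℝ) else 0)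
    (fun a b c => by split <;> norm_num)
    (fun a b c => by split <;> norm_num)
    (fun a b c => by split <;> norm_num)
    (fun a b c => by split <;> norm_num)
    (fun a b c => by split <;> norm_num)
    (fun a b c => by split <;> norm_num)
    (fun a b c => by split <;> norm_num)
    (fun a b c => by split <;> norm_num)
  have hcard : (((Finset.univ.filter fun q : Dom × Dom × Dom × Dom × Dom × Dom =>
        (q.1, q.2.1, q.2.2.1) ∈ R ∧
        (q.2.2.1, q.2.2.2.1, q.2.2.2.2.1) ∈ S ∧
        (q.2.2.2.2.1, q.2.2.2.2.2, q.1) ∈ T ∧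
        (q.2.1, q.2.2.2.1, q.2.2.2.2.2) ∈ K).card : ℕ) : ℝ)
      = ∑ a, ∑ b, ∑ c, ∑ d, ∑ e, ∑ f,
          (if (a, b, c) ∈ R then (1:ℝ) else 0) * (if (c, d, e) ∈ S then (1:ℝ) else 0) *
            (if (e, f, a) ∈ T then (1:ℝ) else 0) * (if (b, d, f) ∈ K then (1:ℝ) else 0) := by
    rw [sum6 (fun a b c d e f =>
      (if (a, b, c) ∈ R then (1:ℝ) else 0) * (if (c, d, e) ∈ S then (1:ℝ) else 0) *
        (if (e, f, a) ∈ T then (1:ℝ) else 0) * (if (b, d, f) ∈ K then (1:ℝ) else 0))]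
    rw [Finset.card_filter]
    push_cast
    refine Finset.sum_congr rfl fun q _ => ?_
    by_cases h1 : (q.1, q.2.1, q.2.2.1) ∈ R <;>
      by_cases h2 : (q.2.2.1, q.2.2.2.1, q.2.2.2.2.1) ∈ S <;>
      by_cases h3 : (q.2.2.2.2.1, q.2.2.2.2.2, q.1) ∈ T <;>
      by_cases h4 : (q.2.1, q.2.2.2.1, q.2.2.2.2.2) ∈ K <;>
      simp [h1, h2, h3, h4]
  have indsum : ∀ W : Finset (Dom × Dom × Dom),
      ∑ a, ∑ b, ∑ c, (if (a, b, c) ∈ W then (1:ℝ) else 0) = W.card := by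
    intro W
    rw [sum3' (fun a b c => if (a, b, c) ∈ W then (1:ℝ) else 0)]
    have : ∀ p : Dom × Dom × Dom,
        (if (p.1, p.2.1, p.2.2) ∈ W then (1:ℝ) else 0) = if p ∈ W then (1:ℝ) else 0 :=
      fun p => rfl
    simp only [this]
    rw [Finset.sum_ite_mem, Finset.univ_inter, Finset.sum_const, nsmul_eq_mul, mul_one]
  rw [indsum R, indsum S, indsum T, indsum K, ← hcard] at key
  have hprod : (R.card : ℝ) * S.card * T.card * K.card ≤ (N:ℝ) * N * N * N := by
    have c1 : (R.card : ℝ) ≤ N := by exact_mod_cast hR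
    have c2 : (S.card : ℝ) ≤ N := by exact_mod_cast hS
    have c3 : (T.card : ℝ) ≤ N := by exact_mod_cast hT
    have c4 : (K.card : ℝ) ≤ N := by exact_mod_cast hK
    have n0 : (0:ℝ) ≤ N := by positivity
    gcongr
  by_contra hlt
  push_neg at hlt
  have hx : ((N ^ 2 : ℕ) : ℝ) < (((Finset.univ.filter fun q : Dom × Dom × Dom × Dom × Dom × Dom =>
        (q.1, q.2.1, q.2.2.1) ∈ R ∧
        (q.2.2.1, q.2.2.2.1, q.2.2.2.2.1) ∈ S ∧
        (q.2.2.2.2.1, q.2.2.2.2.2, q.1) ∈ T ∧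
        (q.2.1, q.2.2.2.1, q.2.2.2.2.2) ∈ K).card : ℕ) : ℝ) := by
    exact_mod_cast hlt
  have hn2 : ((N ^ 2 : ℕ) : ℝ) = (N:ℝ) ^ 2 := by push_cast; ring
  have h0 : (0:ℝ) ≤ ((N ^ 2 : ℕ) : ℝ) := by positivity
  nlinarith [key, hprod, hx, h0]
end

section
/- Product of measures along the hexagon proof: for every tuple (a,b,c,d,e,f) in the hexagon join Q, the two measures p'(abcdef) = deg_K(BD|F=f)/(N²·deg_S(DE|C=c)) and p''(abcdef) = deg_S(DE|C=c)/(N²·deg_K(BD|F=f)) satisfy p'(abcdef) · p''(abcdef) = 1/N⁴, hence their geometric mean equals 1/N² on all of Q, and therefore |Q| ≤ N². -/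
set_option linter.unusedSectionVars false
set_option linter.unusedVariables false

section HexAux

open Finset

variable {Dom : Type*} [Fintype Dom] [DecidableEq Dom]

lemma hex_tcount1 (W : Finset (Dom × Dom × Dom)) :
    ∑ x : Dom, ∑ y : Dom, ∑ z : Dom, (if (x, y, z) ∈ W then (1:ℝ) else 0)
      = W.card := by
  have : ∑ q : Dom × Dom × Dom, (if q ∈ W then (1:ℝ) else 0) = W.card := by
    rw [Finset.sum_boole]; simp
  rw [← this, Fintype.sum_prod_type]
  congr 1; ext x
  rw [Fintype.sum_prod_type]

lemma hex_tcount2 (W : Finset (Dom × Dom × Dom)) :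
    ∑ x : Dom, ∑ y : Dom, ∑ z : Dom, (if (x, z, y) ∈ W then (1:ℝ) else 0)
      = W.card := by
  rw [← hex_tcount1 W]
  congr 1; ext x
  exact Finset.sum_comm

lemma hex_pcount1 (S : Finset (Dom × Dom × Dom)) (c : Dom) :
    ∑ d : Dom, ∑ e : Dom, (if (c, d, e) ∈ S then (1:ℝ) else 0)
      = ((S.filter fun t => t.1 = c).card : ℝ) := by
  have h1 : ∑ p : Dom × Dom, (if (c, p.1, p.2) ∈ S then (1:ℝ) else 0)
      = ((Finset.univ.filter fun p : Dom × Dom => (c, p.1, p.2) ∈ S).card : ℝ) := by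
    rw [Finset.sum_boole]
  have h2 : (Finset.univ.filter fun p : Dom × Dom => (c, p.1, p.2) ∈ S).card
      = (S.filter fun t => t.1 = c).card := by
    refine Finset.card_bij' (fun p _ => (c, p.1, p.2)) (fun t _ => (t.2.1, t.2.2)) ?_ ?_ ?_ ?_
    · intro p hp; simp at hp ⊢; exact hp
    · intro t ht; simp at ht ⊢; obtain ⟨h1, h2⟩ := ht; rw [← h2]; simpa using h1
    · intro p hp; rfl
    · intro t ht; simp at ht; obtain ⟨h1, h2⟩ := ht
      simp [← h2]
  have h3 : ∑ p : Dom × Dom, (if (c, p.1, p.2) ∈ S then (1:ℝ) else 0)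
      = ∑ d : Dom, ∑ e : Dom, (if (c, d, e) ∈ S then (1:ℝ) else 0) := by
    rw [Fintype.sum_prod_type]
  rw [← h3, h1, h2]

lemma hex_pcount3 (K : Finset (Dom × Dom × Dom)) (f : Dom) :
    ∑ b : Dom, ∑ d : Dom, (if (b, d, f) ∈ K then (1:ℝ) else 0)
      = ((K.filter fun t => t.2.2 = f).card : ℝ) := by
  have h1 : ∑ p : Dom × Dom, (if (p.1, p.2, f) ∈ K then (1:ℝ) else 0)
      = ((Finset.univ.filter fun p : Dom × Dom => (p.1, p.2, f) ∈ K).card : ℝ) := by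
    rw [Finset.sum_boole]
  have h2 : (Finset.univ.filter fun p : Dom × Dom => (p.1, p.2, f) ∈ K).card
      = (K.filter fun t => t.2.2 = f).card := by
    refine Finset.card_bij' (fun p _ => (p.1, p.2, f)) (fun t _ => (t.1, t.2.1)) ?_ ?_ ?_ ?_
    · intro p hp; simp at hp ⊢; exact hp
    · intro t ht; simp at ht ⊢; obtain ⟨h1, h2⟩ := ht; rw [← h2]; simpa using h1
    · intro p hp; rfl
    · intro t ht; simp at ht; obtain ⟨h1, h2⟩ := ht
      simp [← h2]
  have h3 : ∑ p : Dom × Dom, (if (p.1, p.2, f) ∈ K then (1:ℝ) else 0)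
      = ∑ b : Dom, ∑ d : Dom, (if (b, d, f) ∈ K then (1:ℝ) else 0) := by
    rw [Fintype.sum_prod_type]
  rw [← h3, h1, h2]

lemma hex_fiber_sum_le (N : ℕ) (W : Finset (Dom × Dom × Dom)) (hW : W.card ≤ N)
    (φ : Dom × Dom × Dom → Dom) (P : Dom → Prop) [DecidablePred P] :
    ∑ x : Dom, (if P x then ((W.filter fun t => φ t = x).card : ℝ) else 0) ≤ N := by
  have h1 : ∑ x : Dom, ((W.filter fun t => φ t = x).card : ℝ) = W.card := by
    rw [← Nat.cast_sum]
    congr 1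
    exact (Finset.card_eq_sum_card_fiberwise (fun t _ => Finset.mem_univ (φ t))).symm
  calc ∑ x : Dom, (if P x then ((W.filter fun t => φ t = x).card : ℝ) else 0)
      ≤ ∑ x : Dom, ((W.filter fun t => φ t = x).card : ℝ) := by
        apply Finset.sum_le_sum; intro x _
        split
        · exact le_rfl
        · positivity
    _ = W.card := h1
    _ ≤ N := by exact_mod_cast hW

variable {Dom : Type*} [Fintype Dom] [DecidableEq Dom]

lemma hex_master (N : ℕ) (P1 P2 P3 : Dom → Dom → Dom → Prop)
    [∀ a b c, Decidable (P1 a b c)] [∀ a b c, Decidable (P2 a b c)]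
    [∀ a b c, Decidable (P3 a b c)]
    (w2 w3 : Dom → ℝ) (hw3 : ∀ x, 0 ≤ w3 x)
    (h1 : ∑ a : Dom, ∑ b : Dom, ∑ c : Dom, (if P1 a b c then (1:ℝ) else 0) ≤ N)
    (h2 : ∀ c, ∑ d : Dom, ∑ e : Dom, (if P2 c d e then (1:ℝ) else 0) = w2 c)
    (h3 : ∀ b d, ∑ f : Dom, (if P3 b d f then w3 f else 0) ≤ N) :
    ∑ a : Dom, ∑ b : Dom, ∑ c : Dom, ∑ d : Dom, ∑ e : Dom, ∑ f : Dom,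
      (if P1 a b c ∧ P2 c d e ∧ P3 b d f then w3 f / w2 c else 0) ≤ (N:ℝ)^2 := by
  have hw2 : ∀ c, 0 ≤ w2 c := by
    intro c; rw [← h2 c]
    apply Finset.sum_nonneg; intro d _
    apply Finset.sum_nonneg; intro e _
    split <;> norm_num
  -- inner claim
  have claim1 : ∀ b c : Dom, ∑ d : Dom, ∑ e : Dom, ∑ f : Dom,
      (if P2 c d e ∧ P3 b d f then w3 f / w2 c else 0) ≤ N := by
    intro b c
    have step1 : ∑ d : Dom, ∑ e : Dom, ∑ f : Dom,
        (if P2 c d e ∧ P3 b d f then w3 f / w2 c else 0)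
        ≤ ∑ d : Dom, ∑ e : Dom, (if P2 c d e then (N:ℝ) / w2 c else 0) := by
      apply Finset.sum_le_sum; intro d _
      apply Finset.sum_le_sum; intro e _
      by_cases hP2 : P2 c d e
      · simp only [hP2, true_and, if_true]
        have : ∑ f : Dom, (if P3 b d f then w3 f / w2 c else 0)
            = (∑ f : Dom, (if P3 b d f then w3 f else 0)) / w2 c := by
          rw [Finset.sum_div]
          congr 1; ext f
          split <;> simp
        rw [this]
        rcases eq_or_lt_of_le (hw2 c) with h | h
        · rw [← h]; simp
        · exact div_le_div_of_nonneg_right (h3 b d) h.le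
      · simp [hP2]
    have step2 : ∑ d : Dom, ∑ e : Dom, (if P2 c d e then (N:ℝ) / w2 c else 0)
        = w2 c * ((N:ℝ) / w2 c) := by
      have : ∀ d e : Dom, (if P2 c d e then (N:ℝ) / w2 c else 0)
          = (if P2 c d e then (1:ℝ) else 0) * ((N:ℝ) / w2 c) := by
        intro d e; split <;> simp
      simp_rw [this, ← Finset.sum_mul]
      rw [h2 c]
    calc _ ≤ w2 c * ((N:ℝ) / w2 c) := step1.trans_eq step2
      _ ≤ N := by
        rcases eq_or_lt_of_le (hw2 c) with h | h
        · rw [← h]; simp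
        · rw [mul_div_cancel₀ _ (ne_of_gt h)]
  -- outer
  have step3 : ∑ a : Dom, ∑ b : Dom, ∑ c : Dom, ∑ d : Dom, ∑ e : Dom, ∑ f : Dom,
      (if P1 a b c ∧ P2 c d e ∧ P3 b d f then w3 f / w2 c else 0)
      ≤ ∑ a : Dom, ∑ b : Dom, ∑ c : Dom, (if P1 a b c then (1:ℝ) else 0) * N := by
    apply Finset.sum_le_sum; intro a _
    apply Finset.sum_le_sum; intro b _
    apply Finset.sum_le_sum; intro c _
    by_cases hP1 : P1 a b c
    · simp only [hP1, true_and, if_true, one_mul]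
      exact claim1 b c
    · simp [hP1]
  calc _ ≤ _ := step3
    _ = (∑ a : Dom, ∑ b : Dom, ∑ c : Dom, (if P1 a b c then (1:ℝ) else 0)) * N := by
        simp_rw [Finset.sum_mul]
    _ ≤ (N:ℝ) * N := by
        apply mul_le_mul_of_nonneg_right h1 (by positivity)
    _ = (N:ℝ)^2 := by ring

end HexAux

def hexPerm (Dom : Type*) :
    (Dom × Dom × Dom × Dom × Dom × Dom) ≃ (Dom × Dom × Dom × Dom × Dom × Dom) where
  toFun p := (p.2.1, p.2.2.2.1, p.2.2.2.2.2, p.2.2.2.2.1, p.1, p.2.2.1)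
  invFun q := (q.2.2.2.2.1, q.1, q.2.2.2.2.2, q.2.1, q.2.2.2.1, q.2.2.1)
  left_inv := by rintro ⟨a,b,c,d,e,f⟩; rfl
  right_inv := by rintro ⟨a,b,c,d,e,f⟩; rfl


set_option maxHeartbeats 1000000 in
/-- Product of the two measures along the hexagon proof: on every tuple of the
hexagon join `Q`, `p' · p'' = 1/N⁴` (so their geometric mean is `1/N²` on `Q`),
and consequently `|Q| ≤ N²`. -/
theorem hexagon_measure_product {Dom : Type*} [Fintype Dom] [DecidableEq Dom]
    (N : ℕ) (hN : 0 < N)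
    (R S T K : Finset (Dom × Dom × Dom))
    (hR : R.card ≤ N) (hS : S.card ≤ N) (hT : T.card ≤ N) (hK : K.card ≤ N)
    (Q : Finset (Dom × Dom × Dom × Dom × Dom × Dom))
    (hQ : Q = Finset.univ.filter fun q =>
        (q.1, q.2.1, q.2.2.1) ∈ R ∧
        (q.2.2.1, q.2.2.2.1, q.2.2.2.2.1) ∈ S ∧
        (q.2.2.2.2.1, q.2.2.2.2.2, q.1) ∈ T ∧
        (q.2.1, q.2.2.2.1, q.2.2.2.2.2) ∈ K) :
    (∀ q ∈ Q,
      let c := q.2.2.1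
      let f := q.2.2.2.2.2
      let degS : ℝ := ((S.filter fun t => t.1 = c).card : ℝ)
      let degK : ℝ := ((K.filter fun t => t.2.2 = f).card : ℝ)
      (degK / ((N : ℝ) ^ 2 * degS)) * (degS / ((N : ℝ) ^ 2 * degK)) =
        1 / (N : ℝ) ^ 4 ∧
      Real.sqrt ((degK / ((N : ℝ) ^ 2 * degS)) * (degS / ((N : ℝ) ^ 2 * degK))) =
        1 / (N : ℝ) ^ 2) ∧
    Q.card ≤ N ^ 2 := by
  have hNR : (0:ℝ) < (N:ℝ) := by exact_mod_cast hN
  -- degrees are at least 1 on Q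
  have hdegS : ∀ q ∈ Q, (1:ℝ) ≤ ((S.filter fun t => t.1 = q.2.2.1).card : ℝ) := by
    intro q hq
    rw [hQ, Finset.mem_filter] at hq
    have hmem : (q.2.2.1, q.2.2.2.1, q.2.2.2.2.1) ∈ S.filter fun t => t.1 = q.2.2.1 := by
      simp [Finset.mem_filter, hq.2.2.1]
    have : 0 < (S.filter fun t => t.1 = q.2.2.1).card := Finset.card_pos.mpr ⟨_, hmem⟩
    exact_mod_cast this
  have hdegK : ∀ q ∈ Q, (1:ℝ) ≤ ((K.filter fun t => t.2.2 = q.2.2.2.2.2).card : ℝ) := by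
    intro q hq
    rw [hQ, Finset.mem_filter] at hq
    have hmem : (q.2.1, q.2.2.2.1, q.2.2.2.2.2) ∈ K.filter fun t => t.2.2 = q.2.2.2.2.2 := by
      simp [Finset.mem_filter, hq.2.2.2.2]
    have : 0 < (K.filter fun t => t.2.2 = q.2.2.2.2.2).card := Finset.card_pos.mpr ⟨_, hmem⟩
    exact_mod_cast this
  constructor
  · -- pointwise part
    intro q hq
    intro c f degS degK
    have hdS : degS = ((S.filter fun t => t.1 = q.2.2.1).card : ℝ) := rfl
    have hdK : degK = ((K.filter fun t => t.2.2 = q.2.2.2.2.2).card : ℝ) := rfl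
    have h1 : (1:ℝ) ≤ degS := by rw [hdS]; exact hdegS q hq
    have h2 : (1:ℝ) ≤ degK := by rw [hdK]; exact hdegK q hq
    have hS0 : degS ≠ 0 := by linarith
    have hK0 : degK ≠ 0 := by linarith
    have hN0 : (N:ℝ) ≠ 0 := ne_of_gt hNR
    have hprod : (degK / ((N : ℝ) ^ 2 * degS)) * (degS / ((N : ℝ) ^ 2 * degK)) =
        1 / (N : ℝ) ^ 4 := by
      field_simp
    refine ⟨hprod, ?_⟩
    rw [hprod]
    have : (1:ℝ) / (N:ℝ)^4 = ((1:ℝ)/(N:ℝ)^2)^2 := by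
      field_simp
    rw [this, Real.sqrt_sq (by positivity)]
  · -- counting part
    have hNR : (0:ℝ) < (N:ℝ) := by exact_mod_cast hN
    set dS : Dom → ℝ := fun x => ((S.filter fun t => t.1 = x).card : ℝ) with hdSdef
    set dK : Dom → ℝ := fun x => ((K.filter fun t => t.2.2 = x).card : ℝ) with hdKdef
    have hdSnn : ∀ x, (0:ℝ) ≤ dS x := fun x => by positivity
    have hdKnn : ∀ x, (0:ℝ) ≤ dK x := fun x => by positivity
    -- Bound A : ∑_{q ∈ Q} dK f / dS c ≤ N²
    have hA : ∑ q ∈ Q, dK q.2.2.2.2.2 / dS q.2.2.1 ≤ (N:ℝ)^2 := by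
      have master := hex_master N (fun a b c => (a,b,c) ∈ R) (fun c d e => (c,d,e) ∈ S)
        (fun b d f => (b,d,f) ∈ K) dS dK hdKnn
        (by rw [hex_tcount1 R]; exact_mod_cast hR)
        (fun c => hex_pcount1 S c)
        (fun b d => hex_fiber_sum_le N K hK (fun t => t.2.2) (fun x => (b,d,x) ∈ K))
      calc ∑ q ∈ Q, dK q.2.2.2.2.2 / dS q.2.2.1
          = ∑ q : Dom × Dom × Dom × Dom × Dom × Dom,
              (if (q.1, q.2.1, q.2.2.1) ∈ R ∧
                  (q.2.2.1, q.2.2.2.1, q.2.2.2.2.1) ∈ S ∧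
                  (q.2.2.2.2.1, q.2.2.2.2.2, q.1) ∈ T ∧
                  (q.2.1, q.2.2.2.1, q.2.2.2.2.2) ∈ K
               then dK q.2.2.2.2.2 / dS q.2.2.1 else 0) := by
            rw [hQ, Finset.sum_filter]
        _ ≤ ∑ q : Dom × Dom × Dom × Dom × Dom × Dom,
              (if (q.1, q.2.1, q.2.2.1) ∈ R ∧
                  (q.2.2.1, q.2.2.2.1, q.2.2.2.2.1) ∈ S ∧
                  (q.2.1, q.2.2.2.1, q.2.2.2.2.2) ∈ K
               then dK q.2.2.2.2.2 / dS q.2.2.1 else 0) := by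
            apply Finset.sum_le_sum; intro q _
            split_ifs with h1 h2 h2
            · exact le_rfl
            · exact absurd ⟨h1.1, h1.2.1, h1.2.2.2⟩ h2
            · have := div_nonneg (hdKnn q.2.2.2.2.2) (hdSnn q.2.2.1); linarith
            · exact le_rfl
        _ ≤ (N:ℝ)^2 := by
            simpa only [Fintype.sum_prod_type] using master
    -- Bound B : ∑_{q ∈ Q} dS c / dK f ≤ N²
    have hB : ∑ q ∈ Q, dS q.2.2.1 / dK q.2.2.2.2.2 ≤ (N:ℝ)^2 := by
      have master := hex_master N (fun a b c => (a,c,b) ∈ T) (fun c d e => (d,e,c) ∈ K)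
        (fun b d f => (b,d,f) ∈ R) dK dS hdSnn
        (by rw [hex_tcount2 T]; exact_mod_cast hT)
        (fun c => hex_pcount3 K c)
        (fun b d => hex_fiber_sum_le N S hS (fun t => t.1) (fun x => (b,d,x) ∈ R))
      calc ∑ q ∈ Q, dS q.2.2.1 / dK q.2.2.2.2.2
          = ∑ q : Dom × Dom × Dom × Dom × Dom × Dom,
              (if (q.1, q.2.1, q.2.2.1) ∈ R ∧
                  (q.2.2.1, q.2.2.2.1, q.2.2.2.2.1) ∈ S ∧
                  (q.2.2.2.2.1, q.2.2.2.2.2, q.1) ∈ T ∧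
                  (q.2.1, q.2.2.2.1, q.2.2.2.2.2) ∈ K
               then dS q.2.2.1 / dK q.2.2.2.2.2 else 0) := by
            rw [hQ, Finset.sum_filter]
        _ ≤ ∑ q : Dom × Dom × Dom × Dom × Dom × Dom,
              (if (q.2.2.2.2.1, q.2.2.2.2.2, q.1) ∈ T ∧
                  (q.2.1, q.2.2.2.1, q.2.2.2.2.2) ∈ K ∧
                  (q.1, q.2.1, q.2.2.1) ∈ R
               then dS q.2.2.1 / dK q.2.2.2.2.2 else 0) := by
            apply Finset.sum_le_sum; intro q _
            split_ifs with h1 h2 h2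
            · exact le_rfl
            · exact absurd ⟨h1.2.2.1, h1.2.2.2, h1.1⟩ h2
            · have := div_nonneg (hdSnn q.2.2.1) (hdKnn q.2.2.2.2.2); linarith
            · exact le_rfl
        _ = ∑ p : Dom × Dom × Dom × Dom × Dom × Dom,
              (if (p.1, p.2.2.1, p.2.1) ∈ T ∧
                  (p.2.2.2.1, p.2.2.2.2.1, p.2.2.1) ∈ K ∧
                  (p.2.1, p.2.2.2.1, p.2.2.2.2.2) ∈ R
               then dS p.2.2.2.2.2 / dK p.2.2.1 else 0) :=
            (Equiv.sum_comp (hexPerm Dom) (fun q : Dom × Dom × Dom × Dom × Dom × Dom =>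
              if (q.2.2.2.2.1, q.2.2.2.2.2, q.1) ∈ T ∧
                  (q.2.1, q.2.2.2.1, q.2.2.2.2.2) ∈ K ∧
                  (q.1, q.2.1, q.2.2.1) ∈ R
               then dS q.2.2.1 / dK q.2.2.2.2.2 else 0)).symm
        _ ≤ (N:ℝ)^2 := by
            simpa only [Fintype.sum_prod_type] using master
    -- conclusion
    have hdegS : ∀ q ∈ Q, (1:ℝ) ≤ dS q.2.2.1 := by
      intro q hq
      rw [hQ, Finset.mem_filter] at hq
      have hmem : (q.2.2.1, q.2.2.2.1, q.2.2.2.2.1) ∈ S.filter fun t => t.1 = q.2.2.1 := by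
        simp [Finset.mem_filter, hq.2.2.1]
      have : 0 < (S.filter fun t => t.1 = q.2.2.1).card := Finset.card_pos.mpr ⟨_, hmem⟩
      show (1:ℝ) ≤ ((S.filter fun t => t.1 = q.2.2.1).card : ℝ)
      exact_mod_cast this
    have hdegK : ∀ q ∈ Q, (1:ℝ) ≤ dK q.2.2.2.2.2 := by
      intro q hq
      rw [hQ, Finset.mem_filter] at hq
      have hmem : (q.2.1, q.2.2.2.1, q.2.2.2.2.2) ∈ K.filter fun t => t.2.2 = q.2.2.2.2.2 := by
        simp [Finset.mem_filter, hq.2.2.2.2]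
      have : 0 < (K.filter fun t => t.2.2 = q.2.2.2.2.2).card := Finset.card_pos.mpr ⟨_, hmem⟩
      show (1:ℝ) ≤ ((K.filter fun t => t.2.2 = q.2.2.2.2.2).card : ℝ)
      exact_mod_cast this
    have hpt : ∀ q ∈ Q, (2:ℝ) ≤ dK q.2.2.2.2.2 / dS q.2.2.1 + dS q.2.2.1 / dK q.2.2.2.2.2 := by
      intro q hq
      have h1 := hdegS q hq
      have h2 := hdegK q hq
      have hS0 : (0:ℝ) < dS q.2.2.1 := by linarith
      have hK0 : (0:ℝ) < dK q.2.2.2.2.2 := by linarith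
      rw [div_add_div _ _ (ne_of_gt hS0) (ne_of_gt hK0), le_div_iff₀ (by positivity)]
      nlinarith [sq_nonneg (dK q.2.2.2.2.2 - dS q.2.2.1)]
    have hfinal : 2 * (Q.card : ℝ) ≤ 2 * (N:ℝ)^2 := by
      calc 2 * (Q.card : ℝ) = ∑ _q ∈ Q, (2:ℝ) := by
            rw [Finset.sum_const, nsmul_eq_mul]; ring
        _ ≤ ∑ q ∈ Q, (dK q.2.2.2.2.2 / dS q.2.2.1 + dS q.2.2.1 / dK q.2.2.2.2.2) :=
            Finset.sum_le_sum hpt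
        _ = (∑ q ∈ Q, dK q.2.2.2.2.2 / dS q.2.2.1) + ∑ q ∈ Q, dS q.2.2.1 / dK q.2.2.2.2.2 :=
            Finset.sum_add_distrib
        _ ≤ (N:ℝ)^2 + (N:ℝ)^2 := add_le_add hA hB
        _ = 2 * (N:ℝ)^2 := by ring
    have : (Q.card : ℝ) ≤ ((N^2 : ℕ) : ℝ) := by push_cast; linarith
    exact_mod_cast this
end

section
/- For every polymatroid h on V = {A_1,...,A_6}, the inequality h(A_1A_2A_3A_4A_5) + h(A_3A_4A_5A_6A_1) + h(A_5A_6A_1A_2A_3) + h(A_2A_4A_6) ≤ h(A_1A_2A_3) + h(A_2A_3A_4) + h(A_3A_4A_5) + h(A_4A_5A_6) + h(A_5A_6A_1) + h(A_6A_1A_2) holds. -/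
/-- For every polymatroid `h` on `V = {A₁,...,A₆}` (here `Fin 6` with `Aᵢ = i-1`):
`h(A₁A₂A₃A₄A₅) + h(A₃A₄A₅A₆A₁) + h(A₅A₆A₁A₂A₃) + h(A₂A₄A₆)
  ≤ h(A₁A₂A₃) + h(A₂A₃A₄) + h(A₃A₄A₅) + h(A₄A₅A₆) + h(A₅A₆A₁) + h(A₆A₁A₂)`. -/
theorem six_cycle_chain_ineq (h : Finset (Fin 6) → ℝ)
    (h0 : h ∅ = 0) (hnn : ∀ S, 0 ≤ h S)
    (hmono : ∀ S T, S ⊆ T → h S ≤ h T)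
    (hsub : ∀ S T, h (S ∪ T) + h (S ∩ T) ≤ h S + h T) :
    h {0, 1, 2, 3, 4} + h {2, 3, 4, 5, 0} + h {4, 5, 0, 1, 2} + h {1, 3, 5} ≤
      h {0, 1, 2} + h {1, 2, 3} + h {2, 3, 4} + h {3, 4, 5} + h {4, 5, 0} +
        h {5, 0, 1} := by
  have H0 : h ({4, 5, 0, 1, 2} : Finset (Fin 6)) + h ({1, 4, 5} : Finset (Fin 6)) ≤ h ({0, 1, 4, 5} : Finset (Fin 6)) + h ({1, 2, 4, 5} : Finset (Fin 6)) := by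
    have := hsub ({0, 1, 4, 5} : Finset (Fin 6)) ({1, 2, 4, 5} : Finset (Fin 6))
    rwa [show ({0, 1, 4, 5} : Finset (Fin 6)) ∪ ({1, 2, 4, 5} : Finset (Fin 6)) = ({4, 5, 0, 1, 2} : Finset (Fin 6)) from by decide, show ({0, 1, 4, 5} : Finset (Fin 6)) ∩ ({1, 2, 4, 5} : Finset (Fin 6)) = ({1, 4, 5} : Finset (Fin 6)) from by decide] at this
  have H1 : h ({2, 3, 4, 5, 0} : Finset (Fin 6)) + h ({3, 4, 5} : Finset (Fin 6)) ≤ h ({0, 3, 4, 5} : Finset (Fin 6)) + h ({2, 3, 4, 5} : Finset (Fin 6)) := by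
    have := hsub ({0, 3, 4, 5} : Finset (Fin 6)) ({2, 3, 4, 5} : Finset (Fin 6))
    rwa [show ({0, 3, 4, 5} : Finset (Fin 6)) ∪ ({2, 3, 4, 5} : Finset (Fin 6)) = ({2, 3, 4, 5, 0} : Finset (Fin 6)) from by decide, show ({0, 3, 4, 5} : Finset (Fin 6)) ∩ ({2, 3, 4, 5} : Finset (Fin 6)) = ({3, 4, 5} : Finset (Fin 6)) from by decide] at this
  have H2 : h ({0, 1, 2, 3, 4} : Finset (Fin 6)) + h ({1, 2, 4} : Finset (Fin 6)) ≤ h ({0, 1, 2, 4} : Finset (Fin 6)) + h ({1, 2, 3, 4} : Finset (Fin 6)) := by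
    have := hsub ({0, 1, 2, 4} : Finset (Fin 6)) ({1, 2, 3, 4} : Finset (Fin 6))
    rwa [show ({0, 1, 2, 4} : Finset (Fin 6)) ∪ ({1, 2, 3, 4} : Finset (Fin 6)) = ({0, 1, 2, 3, 4} : Finset (Fin 6)) from by decide, show ({0, 1, 2, 4} : Finset (Fin 6)) ∩ ({1, 2, 3, 4} : Finset (Fin 6)) = ({1, 2, 4} : Finset (Fin 6)) from by decide] at this
  have H3 : h ({0, 3, 4, 5} : Finset (Fin 6)) + h ({4, 5} : Finset (Fin 6)) ≤ h ({4, 5, 0} : Finset (Fin 6)) + h ({3, 4, 5} : Finset (Fin 6)) := by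
    have := hsub ({4, 5, 0} : Finset (Fin 6)) ({3, 4, 5} : Finset (Fin 6))
    rwa [show ({4, 5, 0} : Finset (Fin 6)) ∪ ({3, 4, 5} : Finset (Fin 6)) = ({0, 3, 4, 5} : Finset (Fin 6)) from by decide, show ({4, 5, 0} : Finset (Fin 6)) ∩ ({3, 4, 5} : Finset (Fin 6)) = ({4, 5} : Finset (Fin 6)) from by decide] at this
  have H4 : h ({0, 1, 2, 4} : Finset (Fin 6)) + h ({1, 2} : Finset (Fin 6)) ≤ h ({0, 1, 2} : Finset (Fin 6)) + h ({1, 2, 4} : Finset (Fin 6)) := by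
    have := hsub ({0, 1, 2} : Finset (Fin 6)) ({1, 2, 4} : Finset (Fin 6))
    rwa [show ({0, 1, 2} : Finset (Fin 6)) ∪ ({1, 2, 4} : Finset (Fin 6)) = ({0, 1, 2, 4} : Finset (Fin 6)) from by decide, show ({0, 1, 2} : Finset (Fin 6)) ∩ ({1, 2, 4} : Finset (Fin 6)) = ({1, 2} : Finset (Fin 6)) from by decide] at this
  have H5 : h ({0, 1, 4, 5} : Finset (Fin 6)) + h ({1, 5} : Finset (Fin 6)) ≤ h ({5, 0, 1} : Finset (Fin 6)) + h ({1, 4, 5} : Finset (Fin 6)) := by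
    have := hsub ({5, 0, 1} : Finset (Fin 6)) ({1, 4, 5} : Finset (Fin 6))
    rwa [show ({5, 0, 1} : Finset (Fin 6)) ∪ ({1, 4, 5} : Finset (Fin 6)) = ({0, 1, 4, 5} : Finset (Fin 6)) from by decide, show ({5, 0, 1} : Finset (Fin 6)) ∩ ({1, 4, 5} : Finset (Fin 6)) = ({1, 5} : Finset (Fin 6)) from by decide] at this
  have H6 : h ({1, 3, 5} : Finset (Fin 6)) + h ({5} : Finset (Fin 6)) ≤ h ({1, 5} : Finset (Fin 6)) + h ({3, 5} : Finset (Fin 6)) := by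
    have := hsub ({1, 5} : Finset (Fin 6)) ({3, 5} : Finset (Fin 6))
    rwa [show ({1, 5} : Finset (Fin 6)) ∪ ({3, 5} : Finset (Fin 6)) = ({1, 3, 5} : Finset (Fin 6)) from by decide, show ({1, 5} : Finset (Fin 6)) ∩ ({3, 5} : Finset (Fin 6)) = ({5} : Finset (Fin 6)) from by decide] at this
  have H7 : h ({1, 2, 3, 4} : Finset (Fin 6)) + h ({2, 3} : Finset (Fin 6)) ≤ h ({1, 2, 3} : Finset (Fin 6)) + h ({2, 3, 4} : Finset (Fin 6)) := by
    have := hsub ({1, 2, 3} : Finset (Fin 6)) ({2, 3, 4} : Finset (Fin 6))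
    rwa [show ({1, 2, 3} : Finset (Fin 6)) ∪ ({2, 3, 4} : Finset (Fin 6)) = ({1, 2, 3, 4} : Finset (Fin 6)) from by decide, show ({1, 2, 3} : Finset (Fin 6)) ∩ ({2, 3, 4} : Finset (Fin 6)) = ({2, 3} : Finset (Fin 6)) from by decide] at this
  have H8 : h ({1, 2, 4, 5} : Finset (Fin 6)) + h ({2, 5} : Finset (Fin 6)) ≤ h ({1, 2, 5} : Finset (Fin 6)) + h ({2, 4, 5} : Finset (Fin 6)) := by
    have := hsub ({1, 2, 5} : Finset (Fin 6)) ({2, 4, 5} : Finset (Fin 6))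
    rwa [show ({1, 2, 5} : Finset (Fin 6)) ∪ ({2, 4, 5} : Finset (Fin 6)) = ({1, 2, 4, 5} : Finset (Fin 6)) from by decide, show ({1, 2, 5} : Finset (Fin 6)) ∩ ({2, 4, 5} : Finset (Fin 6)) = ({2, 5} : Finset (Fin 6)) from by decide] at this
  have H9 : h ({1, 2, 5} : Finset (Fin 6)) + h ({2} : Finset (Fin 6)) ≤ h ({1, 2} : Finset (Fin 6)) + h ({2, 5} : Finset (Fin 6)) := by
    have := hsub ({1, 2} : Finset (Fin 6)) ({2, 5} : Finset (Fin 6))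
    rwa [show ({1, 2} : Finset (Fin 6)) ∪ ({2, 5} : Finset (Fin 6)) = ({1, 2, 5} : Finset (Fin 6)) from by decide, show ({1, 2} : Finset (Fin 6)) ∩ ({2, 5} : Finset (Fin 6)) = ({2} : Finset (Fin 6)) from by decide] at this
  have H10 : h ({2, 4, 5} : Finset (Fin 6)) + h ({5} : Finset (Fin 6)) ≤ h ({2, 5} : Finset (Fin 6)) + h ({4, 5} : Finset (Fin 6)) := by
    have := hsub ({2, 5} : Finset (Fin 6)) ({4, 5} : Finset (Fin 6))
    rwa [show ({2, 5} : Finset (Fin 6)) ∪ ({4, 5} : Finset (Fin 6)) = ({2, 4, 5} : Finset (Fin 6)) from by decide, show ({2, 5} : Finset (Fin 6)) ∩ ({4, 5} : Finset (Fin 6)) = ({5} : Finset (Fin 6)) from by decide] at this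
  have H11 : h ({2, 3, 4, 5} : Finset (Fin 6)) + h ({3, 5} : Finset (Fin 6)) ≤ h ({2, 3, 5} : Finset (Fin 6)) + h ({3, 4, 5} : Finset (Fin 6)) := by
    have := hsub ({2, 3, 5} : Finset (Fin 6)) ({3, 4, 5} : Finset (Fin 6))
    rwa [show ({2, 3, 5} : Finset (Fin 6)) ∪ ({3, 4, 5} : Finset (Fin 6)) = ({2, 3, 4, 5} : Finset (Fin 6)) from by decide, show ({2, 3, 5} : Finset (Fin 6)) ∩ ({3, 4, 5} : Finset (Fin 6)) = ({3, 5} : Finset (Fin 6)) from by decide] at this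
  have H12 : h ({2, 5} : Finset (Fin 6)) + h (∅ : Finset (Fin 6)) ≤ h ({2} : Finset (Fin 6)) + h ({5} : Finset (Fin 6)) := by
    have := hsub ({2} : Finset (Fin 6)) ({5} : Finset (Fin 6))
    rwa [show ({2} : Finset (Fin 6)) ∪ ({5} : Finset (Fin 6)) = ({2, 5} : Finset (Fin 6)) from by decide, show ({2} : Finset (Fin 6)) ∩ ({5} : Finset (Fin 6)) = (∅ : Finset (Fin 6)) from by decide] at this
  have H13 : h ({2, 3, 5} : Finset (Fin 6)) + h ({3} : Finset (Fin 6)) ≤ h ({2, 3} : Finset (Fin 6)) + h ({3, 5} : Finset (Fin 6)) := by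
    have := hsub ({2, 3} : Finset (Fin 6)) ({3, 5} : Finset (Fin 6))
    rwa [show ({2, 3} : Finset (Fin 6)) ∪ ({3, 5} : Finset (Fin 6)) = ({2, 3, 5} : Finset (Fin 6)) from by decide, show ({2, 3} : Finset (Fin 6)) ∩ ({3, 5} : Finset (Fin 6)) = ({3} : Finset (Fin 6)) from by decide] at this
  have H14 : h ({3, 5} : Finset (Fin 6)) + h (∅ : Finset (Fin 6)) ≤ h ({3} : Finset (Fin 6)) + h ({5} : Finset (Fin 6)) := by
    have := hsub ({3} : Finset (Fin 6)) ({5} : Finset (Fin 6))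
    rwa [show ({3} : Finset (Fin 6)) ∪ ({5} : Finset (Fin 6)) = ({3, 5} : Finset (Fin 6)) from by decide, show ({3} : Finset (Fin 6)) ∩ ({5} : Finset (Fin 6)) = (∅ : Finset (Fin 6)) from by decide] at this
  linarith [h0, H0, H1, H2, H3, H4, H5, H6, H7, H8, H9, H10, H11, H12, H13, H14]
end

section
/- For every polymatroid h on V = {A_1,A_2,A_3,A_4,B_1,B_2,B_3,B_4}, the inequality h(A_1A_2A_3A_4) + h(B_1B_2B_3B_4) + h(A_1A_3B_1B_3) + h(A_2B_2) + h(A_4B_4) ≤ h(A_1A_2) + h(A_2A_3) + h(A_3A_4) + h(A_4A_1) + h(B_1B_2) + h(B_2B_3) + h(B_3B_4) + h(B_4B_1) holds. -/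
/-- For every polymatroid `h` on `V = {A₁,A₂,A₃,A₄,B₁,B₂,B₃,B₄}` (here `Fin 8` with
`A₁=0, A₂=1, A₃=2, A₄=3, B₁=4, B₂=5, B₃=6, B₄=7`):
`h(A₁A₂A₃A₄) + h(B₁B₂B₃B₄) + h(A₁A₃B₁B₃) + h(A₂B₂) + h(A₄B₄)
  ≤ h(A₁A₂) + h(A₂A₃) + h(A₃A₄) + h(A₄A₁) + h(B₁B₂) + h(B₂B₃) + h(B₃B₄) + h(B₄B₁)`. -/
theorem two_squares_ineq (h : Finset (Fin 8) → ℝ)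
    (h0 : h ∅ = 0) (hnn : ∀ S, 0 ≤ h S)
    (hmono : ∀ S T, S ⊆ T → h S ≤ h T)
    (hsub : ∀ S T, h (S ∪ T) + h (S ∩ T) ≤ h S + h T) :
    h {0, 1, 2, 3} + h {4, 5, 6, 7} + h {0, 2, 4, 6} + h {1, 5} + h {3, 7} ≤
      h {0, 1} + h {1, 2} + h {2, 3} + h {3, 0} + h {4, 5} + h {5, 6} + h {6, 7} +
        h {7, 4} := by
  have s1 := hsub {0, 1} {1, 2}
  have s2 := hsub {2, 3} {3, 0}
  have s3 := hsub {0, 1, 2} {0, 2, 3}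
  have s4 := hsub {4, 5} {5, 6}
  have s5 := hsub {6, 7} {7, 4}
  have s6 := hsub {4, 5, 6} {4, 6, 7}
  have s7 := hsub {0, 2} {4, 6}
  have s8 := hsub {1} {5}
  have s9 := hsub {3} {7}
  have e1 : ({0, 1} ∪ {1, 2} : Finset (Fin 8)) = {0, 1, 2} := by decide
  have e1' : ({0, 1} ∩ {1, 2} : Finset (Fin 8)) = {1} := by decide
  have e2 : ({2, 3} ∪ {3, 0} : Finset (Fin 8)) = {0, 2, 3} := by decide
  have e2' : ({2, 3} ∩ {3, 0} : Finset (Fin 8)) = {3} := by decide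
  have e3 : ({0, 1, 2} ∪ {0, 2, 3} : Finset (Fin 8)) = {0, 1, 2, 3} := by decide
  have e3' : ({0, 1, 2} ∩ {0, 2, 3} : Finset (Fin 8)) = {0, 2} := by decide
  have e4 : ({4, 5} ∪ {5, 6} : Finset (Fin 8)) = {4, 5, 6} := by decide
  have e4' : ({4, 5} ∩ {5, 6} : Finset (Fin 8)) = {5} := by decide
  have e5 : ({6, 7} ∪ {7, 4} : Finset (Fin 8)) = {4, 6, 7} := by decide
  have e5' : ({6, 7} ∩ {7, 4} : Finset (Fin 8)) = {7} := by decide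
  have e6 : ({4, 5, 6} ∪ {4, 6, 7} : Finset (Fin 8)) = {4, 5, 6, 7} := by decide
  have e6' : ({4, 5, 6} ∩ {4, 6, 7} : Finset (Fin 8)) = {4, 6} := by decide
  have e7 : ({0, 2} ∪ {4, 6} : Finset (Fin 8)) = {0, 2, 4, 6} := by decide
  have e7' : ({0, 2} ∩ {4, 6} : Finset (Fin 8)) = ∅ := by decide
  have e8 : ({1} ∪ {5} : Finset (Fin 8)) = {1, 5} := by decide
  have e8' : ({1} ∩ {5} : Finset (Fin 8)) = ∅ := by decide
  have e9 : ({3} ∪ {7} : Finset (Fin 8)) = {3, 7} := by decide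
  have e9' : ({3} ∩ {7} : Finset (Fin 8)) = ∅ := by decide
  rw [e1, e1'] at s1
  rw [e2, e2'] at s2
  rw [e3, e3'] at s3
  rw [e4, e4'] at s4
  rw [e5, e5'] at s5
  rw [e6, e6'] at s6
  rw [e7, e7', h0] at s7
  rw [e8, e8', h0] at s8
  rw [e9, e9', h0] at s9
  linarith
end
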